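/- For every r ≥ 0 and every σ ∈ S_n, if the coefficient of σ in h_r(J_1,…,J_n) is nonzero, then n − cycles(σ) ≤ r and r − (n − cycles(σ)) is even; that is, cycles(σ) = n − r + 2g for some integer g ≥ 0. -/

import Mathlib

/-- The Jucys–Murphy element `J_{i+1}` (1-based: `J_1 = 0`,
`J_i = (1,i) + ⋯ + (i-1,i)`) in the complex group algebra of `S_n`. -/
noncomputable def jm (n : ℕ) (i : Fin n) : MonoidAlgebra ℂ (Equiv.Perm (Fin n)) :=
  ∑ k ∈ Finset.univ.filter (fun k => k < i),
    MonoidAlgebra.of ℂ (Equiv.Perm (Fin n)) (Equiv.swap k i)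

/-- The number of orbits of a permutation (cycles, counting fixed points). -/
def cycles {n : ℕ} (σ : Equiv.Perm (Fin n)) : ℕ :=
  σ.cycleType.card + (Finset.univ.filter fun x => σ x = x).card

/-- The `r`-th complete homogeneous symmetric polynomial evaluated at the Jucys–Murphy
elements: `h_r(J_1,…,J_n) = Σ_{i_1 ≤ ⋯ ≤ i_r} J_{i_1} ⋯ J_{i_r}`, the sum running over
all multisets of size `r` (the JM elements commute, so the order of the factors is
immaterial; we multiply them in increasing order). -/
noncomputable def hJM (n r : ℕ) : MonoidAlgebra ℂ (Equiv.Perm (Fin n)) :=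
  ∑ m : Sym (Fin n) r, ((Multiset.sort (m : Multiset (Fin n)) (· ≤ ·)).map (jm n)).prod

section Auxiliary

open Equiv Equiv.Perm Finset

variable {n : ℕ}

/-- Orbit count of a permutation as the cardinality of the `SameCycle` quotient. -/
noncomputable def orbCount (σ : Equiv.Perm (Fin n)) : ℕ :=
  Nat.card (Quotient (SameCycle.setoid σ))

/-- Classify a point: either its (nontrivial) cycle, or itself as a fixed point. -/
def toRep (σ : Equiv.Perm (Fin n)) (x : Fin n) :
    {c : Equiv.Perm (Fin n) // c ∈ σ.cycleFactorsFinset} ⊕ {x : Fin n // σ x = x} :=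
  if h : σ x = x then Sum.inr ⟨x, h⟩
  else Sum.inl ⟨σ.cycleOf x, cycleOf_mem_cycleFactorsFinset_iff.2 (mem_support.2 h)⟩

lemma toRep_resp (σ : Equiv.Perm (Fin n)) {x y : Fin n} (h : σ.SameCycle x y) :
    toRep σ x = toRep σ y := by
  by_cases hx : σ x = x
  · have hxy : x = y := h.eq_of_left hx
    subst hxy; rfl
  · have hy : ¬ σ y = y := fun hy => hx (h.apply_eq_self_iff.2 hy)
    rw [toRep, toRep, dif_neg hx, dif_neg hy]
    exact congrArg Sum.inl (Subtype.ext h.cycleOf_eq)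

lemma toRep_bij (σ : Equiv.Perm (Fin n)) :
    Function.Bijective (@Quotient.lift _ _ (SameCycle.setoid σ) (toRep σ)
      (fun _ _ h => toRep_resp σ h)) := by
  constructor
  · refine Quotient.ind fun x => Quotient.ind fun y h => ?_
    simp only [Quotient.lift_mk] at h
    rw [toRep, toRep] at h
    by_cases hx : σ x = x <;> by_cases hy : σ y = y
    · rw [dif_pos hx, dif_pos hy] at h
      cases h; rfl
    · rw [dif_pos hx, dif_neg hy] at h; cases h
    · rw [dif_neg hx, dif_pos hy] at h; cases h
    · rw [dif_neg hx, dif_neg hy] at h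
      have hcyc : σ.cycleOf x = σ.cycleOf y := congrArg Subtype.val (Sum.inl.inj h)
      have hmem : y ∈ (σ.cycleOf y).support :=
        mem_support_cycleOf_iff.2 ⟨SameCycle.refl _ _, mem_support.2 hy⟩
      rw [← hcyc] at hmem
      exact Quotient.sound (mem_support_cycleOf_iff.1 hmem).1
  · rintro (⟨c, hc⟩ | ⟨x, hx⟩)
    · obtain ⟨x, hx1, -⟩ := (mem_cycleFactorsFinset_iff.1 hc).1
      have hxsup : x ∈ c.support := mem_support.2 hx1
      have hceq : c = σ.cycleOf x := cycle_is_cycleOf hxsup hc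
      have hσx : ¬ σ x = x := by
        rw [← (mem_cycleFactorsFinset_iff.1 hc).2 x hxsup]; exact hx1
      refine ⟨Quotient.mk _ x, ?_⟩
      show toRep σ x = _
      rw [toRep, dif_neg hσx]
      exact congrArg Sum.inl (Subtype.ext hceq.symm)
    · exact ⟨Quotient.mk _ x, by show toRep σ x = _; rw [toRep, dif_pos hx]⟩

lemma cycles_eq_orbCount (σ : Equiv.Perm (Fin n)) : cycles σ = orbCount σ := by
  have h1 := Nat.card_eq_of_bijective _ (toRep_bij σ)
  rw [cycles, orbCount, h1, Nat.card_sum, Nat.card_eq_fintype_card, Nat.card_eq_fintype_card,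
    Fintype.card_coe, Fintype.card_subtype, cycleType_def, Multiset.card_map]
  rfl

/-- The setoid obtained from the orbit partition of `σ` by additionally gluing the
classes of `a` and `b`. -/
def mergeSetoid (σ : Equiv.Perm (Fin n)) (a b : Fin n) : Setoid (Fin n) where
  r x y := σ.SameCycle x y ∨ (σ.SameCycle x a ∧ σ.SameCycle b y) ∨
    (σ.SameCycle x b ∧ σ.SameCycle a y)
  iseqv := by
    constructor
    · intro x; exact Or.inl (SameCycle.refl σ x)
    · rintro x y (h | ⟨h1, h2⟩ | ⟨h1, h2⟩)
      exacts [Or.inl h.symm, Or.inr (Or.inr ⟨h2.symm, h1.symm⟩),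
        Or.inr (Or.inl ⟨h2.symm, h1.symm⟩)]
    · rintro x y z (h | ⟨h1, h2⟩ | ⟨h1, h2⟩) (h' | ⟨h1', h2'⟩ | ⟨h1', h2'⟩)
      exacts [Or.inl (h.trans h'),
        Or.inr (Or.inl ⟨h.trans h1', h2'⟩),
        Or.inr (Or.inr ⟨h.trans h1', h2'⟩),
        Or.inr (Or.inl ⟨h1, h2.trans h'⟩),
        Or.inr (Or.inl ⟨h1, h2'⟩),
        Or.inl (h1.trans h2'),
        Or.inr (Or.inr ⟨h1, h2.trans h'⟩),
        Or.inl (h1.trans h2'),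
        Or.inr (Or.inr ⟨h1, h2'⟩)]

lemma orbCount_le_merge (σ : Equiv.Perm (Fin n)) (a b : Fin n) :
    orbCount σ ≤ Nat.card (Quotient (mergeSetoid σ a b)) + 1 := by
  classical
  set S := SameCycle.setoid σ with hS
  set E := mergeSetoid σ a b with hE
  let π : Quotient S → Quotient E :=
    @Quotient.lift _ _ S (fun x => Quotient.mk E x)
      (fun x y h => Quotient.sound (Or.inl h))
  let ψ : Quotient S → Quotient E ⊕ Unit := fun q =>
    if q = Quotient.mk S b then Sum.inr () else Sum.inl (π q)
  have hinj : Function.Injective ψ := by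
    intro q1 q2 h
    by_cases h1 : q1 = Quotient.mk S b <;> by_cases h2 : q2 = Quotient.mk S b
    · rw [h1, h2]
    · simp only [ψ, if_pos h1, if_neg h2] at h; cases h
    · simp only [ψ, if_neg h1, if_pos h2] at h; cases h
    · simp only [ψ, if_neg h1, if_neg h2] at h
      replace h := Sum.inl.inj h
      obtain ⟨x, rfl⟩ := Quotient.exists_rep q1
      obtain ⟨y, rfl⟩ := Quotient.exists_rep q2
      rcases Quotient.exact h with hxy | ⟨hxa, hby⟩ | ⟨hxb, hay⟩
      · exact Quotient.sound hxy
      · exact absurd (Quotient.sound hby.symm) h2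
      · exact absurd (Quotient.sound hxb) h1
  calc Nat.card (Quotient S) ≤ Nat.card (Quotient E ⊕ Unit) :=
        Nat.card_le_card_of_injective ψ hinj
    _ = Nat.card (Quotient E) + 1 := by
        rw [Nat.card_sum]; simp

lemma merge_le_orbCount (σ : Equiv.Perm (Fin n)) (a b : Fin n) :
    Nat.card (Quotient (mergeSetoid σ a b)) ≤ orbCount (Equiv.swap a b * σ) := by
  set τ := Equiv.swap a b * σ with hτ
  set E := mergeSetoid σ a b with hE
  have base : ∀ x : Fin n, E.r x (τ x) := by
    intro x
    by_cases h1 : σ x = a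
    · have hx : τ x = b := by
        rw [hτ, Equiv.Perm.mul_apply, h1, Equiv.swap_apply_left]
      rw [hx]
      exact Or.inr (Or.inl ⟨⟨1, by simp [h1]⟩, SameCycle.refl σ b⟩)
    · by_cases h2 : σ x = b
      · have hx : τ x = a := by
          rw [hτ, Equiv.Perm.mul_apply, h2, Equiv.swap_apply_right]
        rw [hx]
        exact Or.inr (Or.inr ⟨⟨1, by simp [h2]⟩, SameCycle.refl σ a⟩)
      · have hx : τ x = σ x := by
          rw [hτ, Equiv.Perm.mul_apply, Equiv.swap_apply_of_ne_of_ne h1 h2]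
        rw [hx]
        exact Or.inl ⟨1, by simp⟩
  have pow : ∀ (i : ℤ) (x : Fin n), E.r x ((τ ^ i) x) := by
    intro i
    induction i using Int.induction_on with
    | zero => intro x; simpa using (mergeSetoid σ a b).refl x
    | succ i ih =>
      intro x
      have h1 : (τ ^ ((i : ℤ) + 1)) x = (τ ^ (i : ℤ)) (τ x) := by
        rw [zpow_add_one, Equiv.Perm.mul_apply]
      rw [h1]
      exact E.trans (base x) (ih (τ x))
    | pred i ih =>
      intro x
      have h1 : (τ ^ (-(i : ℤ) - 1)) x = (τ ^ (-(i : ℤ))) (τ⁻¹ x) := by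
        rw [zpow_sub_one, Equiv.Perm.mul_apply]
      have h2 : E.r x (τ⁻¹ x) := by
        have := base (τ⁻¹ x)
        rw [show τ (τ⁻¹ x) = x from (Equiv.Perm.inv_eq_iff_eq.mp rfl).symm] at this
        exact E.symm this
      rw [h1]
      exact E.trans h2 (ih (τ⁻¹ x))
  let φ : Quotient (SameCycle.setoid τ) → Quotient E :=
    @Quotient.lift _ _ (SameCycle.setoid τ) (fun x => Quotient.mk E x)
      (fun x y h => by
        obtain ⟨i, hi⟩ := (h : τ.SameCycle x y)
        exact Quotient.sound (hi ▸ pow i x))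
  have hsurj : Function.Surjective φ :=
    Quotient.ind (fun x => ⟨Quotient.mk _ x, rfl⟩)
  exact Nat.card_le_card_of_surjective φ hsurj

lemma cycles_le_swap_mul (σ : Equiv.Perm (Fin n)) (a b : Fin n) :
    cycles σ ≤ cycles (Equiv.swap a b * σ) + 1 := by
  rw [cycles_eq_orbCount, cycles_eq_orbCount]
  exact le_trans (orbCount_le_merge σ a b)
    (Nat.add_le_add_right (merge_le_orbCount σ a b) 1)

lemma cycles_one : cycles (1 : Equiv.Perm (Fin n)) = n := by
  rw [cycles, Equiv.Perm.cycleType_one]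
  simp

lemma support_card_add (σ : Equiv.Perm (Fin n)) :
    (Finset.univ.filter fun x => σ x = x).card + σ.support.card = n := by
  have := Finset.card_filter_add_card_filter_not (s := (univ : Finset (Fin n)))
    (p := fun x => σ x = x)
  rw [Finset.card_univ, Fintype.card_fin] at this
  rw [show σ.support = Finset.univ.filter (fun a => ¬ σ a = a) from rfl]
  exact this

lemma cycleType_card_le_sum (σ : Equiv.Perm (Fin n)) :
    Multiset.card σ.cycleType ≤ σ.cycleType.sum := by
  have := Multiset.card_nsmul_le_sum (s := σ.cycleType) (a := 1)
    (fun x hx => le_trans (by norm_num) (Equiv.Perm.two_le_of_mem_cycleType hx))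
  simpa using this

lemma cycles_le (σ : Equiv.Perm (Fin n)) : cycles σ ≤ n := by
  have h1 := support_card_add σ
  have h2 := cycleType_card_le_sum σ
  rw [Equiv.Perm.sum_cycleType] at h2
  rw [cycles]
  omega

lemma cycles_bound (l : List (Equiv.Perm (Fin n))) (hl : ∀ g ∈ l, g.IsSwap) :
    n - cycles l.prod ≤ l.length := by
  induction l with
  | nil => simp [cycles_one]
  | cons s t ih =>
    obtain ⟨a, b, -, rfl⟩ := hl s (List.mem_cons_self (a := s) (l := t))
    have h1 := cycles_le_swap_mul t.prod a b
    have h2 := ih (fun g hg => hl g (List.mem_cons_of_mem _ hg))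
    rw [List.prod_cons, List.length_cons]
    omega

lemma cycles_parity (l : List (Equiv.Perm (Fin n))) (hl : ∀ g ∈ l, g.IsSwap) :
    Even (l.length + n + cycles l.prod) := by
  set σ := l.prod with hσ
  have hsign : ((-1 : ℤˣ)) ^ (σ.cycleType.sum + Multiset.card σ.cycleType)
      = (-1 : ℤˣ) ^ l.length := by
    rw [← Equiv.Perm.sign_of_cycleType, hσ, Equiv.Perm.sign_prod_list_swap hl]
  have hone : ((-1 : ℤ)) ^ (σ.cycleType.sum + Multiset.card σ.cycleType + l.length) = 1 := by
    have := congrArg (fun u : ℤˣ => (u : ℤ)) hsign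
    simp only [Units.val_pow_eq_pow_val] at this
    rw [pow_add]
    norm_num at this ⊢
    rw [this, ← pow_add, ← two_mul, pow_mul]
    norm_num
  have heven : Even (σ.cycleType.sum + Multiset.card σ.cycleType + l.length) :=
    (neg_one_pow_eq_one_iff_even (R := ℤ) (by norm_num)).1 hone
  have h1 := support_card_add σ
  rw [← Equiv.Perm.sum_cycleType] at h1
  have hc : cycles σ = Multiset.card σ.cycleType
      + (Finset.univ.filter fun x => σ x = x).card := rfl
  obtain ⟨t, ht⟩ := heven
  exact ⟨t + (Finset.univ.filter fun x => σ x = x).card, by omega⟩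

lemma coeff_prod_jm (n : ℕ) (L : List (Fin n)) :
    ∀ (σ : Equiv.Perm (Fin n)), ((L.map (jm n)).prod).coeff σ ≠ 0 →
    ∃ l : List (Equiv.Perm (Fin n)), (∀ g ∈ l, g.IsSwap) ∧ l.length = L.length ∧ l.prod = σ := by
  induction L with
  | nil =>
    intro σ hσ
    refine ⟨[], by simp, rfl, ?_⟩
    simp only [List.map_nil, List.prod_nil] at hσ
    rcases eq_or_ne σ 1 with rfl | hne
    · rfl
    · exact absurd (by rw [MonoidAlgebra.one_def]; exact Finsupp.single_eq_of_ne' (Ne.symm hne)) hσ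
  | cons i L ih =>
    intro σ hσ
    rw [List.map_cons, List.prod_cons, jm, Finset.sum_mul] at hσ
    rw [MonoidAlgebra.coeff_sum, Finset.sum_apply'] at hσ
    obtain ⟨k, hk, hne⟩ := Finset.exists_ne_zero_of_sum_ne_zero hσ
    rw [MonoidAlgebra.of_apply, MonoidAlgebra.coeff_single_mul_apply, one_mul, Equiv.swap_inv] at hne
    obtain ⟨l, hl1, hl2, hl3⟩ := ih _ hne
    have hki : k ≠ i := Fin.ne_of_lt (Finset.mem_filter.1 hk).2
    refine ⟨Equiv.swap k i :: l, List.forall_mem_cons.2 ⟨⟨k, i, hki, rfl⟩, hl1⟩,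
      by simp [hl2], ?_⟩
    rw [List.prod_cons, hl3, ← mul_assoc, Equiv.swap_mul_self, one_mul]

lemma hJM_coeff_swaps (n r : ℕ) (σ : Equiv.Perm (Fin n)) (h : (hJM n r).coeff σ ≠ 0) :
    ∃ l : List (Equiv.Perm (Fin n)), (∀ g ∈ l, g.IsSwap) ∧ l.length = r ∧ l.prod = σ := by
  have h1 : ∃ m : Sym (Fin n) r,
      (((Multiset.sort (m : Multiset (Fin n)) (· ≤ ·)).map (jm n)).prod).coeff σ ≠ 0 := by
    by_contra hc
    push_neg at hc
    exact h (by rw [hJM, MonoidAlgebra.coeff_sum, Finset.sum_apply']; exact Finset.sum_eq_zero fun m _ => hc m)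
  obtain ⟨m, hm⟩ := h1
  obtain ⟨l, h1, h2, h3⟩ := coeff_prod_jm n _ σ hm
  exact ⟨l, h1, by rw [h2, Multiset.length_sort]; exact m.2, h3⟩

end Auxiliary

/-- If the coefficient of `σ` in `h_r(J_1,…,J_n)` is nonzero then
`n − cycles(σ) ≤ r` and `r − (n − cycles(σ))` is even; equivalently,
`cycles(σ) = n − r + 2g` for some integer `g ≥ 0`. -/
theorem hJM_coeff_ne_zero_imp (n : ℕ) (hn : 1 ≤ n) (r : ℕ) (σ : Equiv.Perm (Fin n))
    (h : (hJM n r).coeff σ ≠ 0) :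
    n - cycles σ ≤ r ∧ ∃ g : ℕ, (cycles σ : ℤ) = (n : ℤ) - (r : ℤ) + 2 * (g : ℤ) := by
  obtain ⟨l, hsw, hlen, hprod⟩ := hJM_coeff_swaps n r σ h
  have hb := cycles_bound l hsw
  have hp := cycles_parity l hsw
  rw [hprod] at hb hp
  rw [hlen] at hb hp
  have hle := cycles_le σ
  obtain ⟨t, ht⟩ := hp
  refine ⟨hb, ⟨(r + cycles σ - n) / 2, ?_⟩⟩
  omega
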